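/- In the non-matched medium case with left mass perturbation Δ₀, the coefficients (α̃_x, β̃_x) of the backward recursion on 0 ≤ x ≤ L with terminal conditions α̃_L = e^{i(k₁-k)L}·(e^{ik₁} - e^{-ik})/(2i sin k), β̃_L = -e^{i(k₁+k)L}·(e^{ik₁} - e^{ik})/(2i sin k) satisfy |α̃_x|² - |β̃_x|² = sin k₁ / sin k for all 0 ≤ x ≤ L. -/

import Mathlib

private lemma wronskian_step_key (c E F A B A' B' : ℂ)
    (hc : starRingEnd ℂ c = -c) (hEF : E * F = 1) (hE : starRingEnd ℂ E = F)
    (hA' : A' = A - c * (A + B * F)) (hB' : B' = B + c * (A * E + B)) :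
    A' * starRingEnd ℂ A' - B' * starRingEnd ℂ B' =
      A * starRingEnd ℂ A - B * starRingEnd ℂ B := by
  have hF : starRingEnd ℂ F = E := by rw [← hE, Complex.conj_conj]
  subst hA' hB'
  simp only [map_sub, map_add, map_mul, hc, hE, hF]
  linear_combination (c ^ 2 * (A * starRingEnd ℂ A - B * starRingEnd ℂ B)) * hEF

theorem wronskian_nonmatched (k k₁ ω : ℝ)
    (hk : 0 < k) (hkπ : k < Real.pi) (hk₁ : 0 < k₁) (hk₁π : k₁ < Real.pi)
    (hω : 0 < ω) (L : ℤ) (hL : 0 ≤ L) (m : ℤ → ℝ) (a b : ℤ → ℂ)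
    (ha : ∀ x : ℤ, 0 < x → x ≤ L → a (x - 1) = a x -
      (Complex.I * (ω:ℂ) ^ 2 / (2 * (Real.sin k : ℂ))) * (m x : ℂ) *
        (a x + b x * Complex.exp (-2 * Complex.I * (k : ℂ) * (x : ℂ))))
    (hb : ∀ x : ℤ, 0 < x → x ≤ L → b (x - 1) = b x +
      (Complex.I * (ω:ℂ) ^ 2 / (2 * (Real.sin k : ℂ))) * (m x : ℂ) *
        (a x * Complex.exp (2 * Complex.I * (k : ℂ) * (x : ℂ)) + b x))
    (haL : a L = Complex.exp (Complex.I * ((k₁:ℂ) - (k:ℂ)) * (L:ℂ)) *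
      (Complex.exp (Complex.I * (k₁:ℂ)) - Complex.exp (-Complex.I * (k:ℂ))) /
        (2 * Complex.I * (Real.sin k : ℂ)))
    (hbL : b L = -(Complex.exp (Complex.I * ((k₁:ℂ) + (k:ℂ)) * (L:ℂ)) *
      (Complex.exp (Complex.I * (k₁:ℂ)) - Complex.exp (Complex.I * (k:ℂ))) /
        (2 * Complex.I * (Real.sin k : ℂ)))) :
    ∀ x : ℤ, 0 ≤ x → x ≤ L →
      ‖a x‖ ^ 2 - ‖b x‖ ^ 2 = Real.sin k₁ / Real.sin k := by
  have hs : Real.sin k ≠ 0 := ne_of_gt (Real.sin_pos_of_pos_of_lt_pi hk hkπ)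
  have key : ∀ n : ℕ, ∀ x : ℤ, 0 ≤ x → L - x = n →
      Complex.normSq (a x) - Complex.normSq (b x) = Real.sin k₁ / Real.sin k := by
    intro n
    induction n with
    | zero =>
      intro x hx0 hxn
      have hxL : x = L := by omega
      subst hxL
      rw [haL, hbL]
      have e1 : Complex.I * ((k₁:ℂ) - (k:ℂ)) * (x:ℂ) = ((k₁ - k) * x : ℝ) * Complex.I := by
        push_cast; ring
      have e2 : Complex.I * ((k₁:ℂ) + (k:ℂ)) * (x:ℂ) = ((k₁ + k) * x : ℝ) * Complex.I := by
        push_cast; ring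
      have e3 : Complex.I * (k₁:ℂ) = (k₁ : ℝ) * Complex.I := by ring
      have e4 : -Complex.I * (k:ℂ) = ((-k : ℝ) : ℂ) * Complex.I := by push_cast; ring
      have e5 : Complex.I * (k:ℂ) = (k : ℝ) * Complex.I := by ring
      have hn : ∀ y : ℝ, Complex.normSq (Complex.exp ((y:ℂ) * Complex.I)) = 1 := by
        intro y
        rw [Complex.normSq_eq_norm_sq, Complex.norm_exp_ofReal_mul_I]; norm_num
      rw [e1, e2, e3, e4, e5]
      simp only [map_div₀, map_mul, map_neg, Complex.normSq_neg]
      rw [hn, hn]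
      simp only [Complex.normSq_apply, Complex.sub_re, Complex.sub_im,
        Complex.exp_ofReal_mul_I_re, Complex.exp_ofReal_mul_I_im,
        Complex.mul_re, Complex.mul_im, Complex.I_re, Complex.I_im,
        Complex.ofReal_re, Complex.ofReal_im, Real.cos_neg, Real.sin_neg,
        Complex.re_ofNat, Complex.im_ofNat]
      field_simp
      ring
    | succ n ih =>
      intro x hx0 hxn
      have hprev := ih (x + 1) (by omega) (by omega)
      have hA := ha (x + 1) (by omega) (by omega)
      have hB := hb (x + 1) (by omega) (by omega)
      rw [show (x : ℤ) + 1 - 1 = x from by ring] at hA hB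
      set c : ℂ := Complex.I * (ω:ℂ) ^ 2 / (2 * (Real.sin k : ℂ)) * (m (x+1) : ℂ) with hcdef
      set E : ℂ := Complex.exp (2 * Complex.I * (k : ℂ) * ((x+1 : ℤ) : ℂ)) with hEdef
      set F : ℂ := Complex.exp (-2 * Complex.I * (k : ℂ) * ((x+1 : ℤ) : ℂ)) with hFdef
      have hc : starRingEnd ℂ c = -c := by
        rw [hcdef]
        simp only [map_mul, map_div₀, Complex.conj_I, Complex.conj_ofReal, map_pow,
          map_ofNat]
        ring
      have hEF : E * F = 1 := by
        rw [hEdef, hFdef, ← Complex.exp_add,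
          show 2 * Complex.I * (k : ℂ) * ((x+1 : ℤ) : ℂ) +
            -2 * Complex.I * (k : ℂ) * ((x+1 : ℤ) : ℂ) = 0 from by ring,
          Complex.exp_zero]
      have hE : starRingEnd ℂ E = F := by
        rw [hEdef, hFdef, ← Complex.exp_conj]
        congr 1
        simp only [map_mul, Complex.conj_I, Complex.conj_ofReal, map_intCast, map_ofNat]
        ring
      have hcplx := wronskian_step_key c E F (a (x+1)) (b (x+1)) (a x) (b x) hc hEF hE
        hA hB
      rw [Complex.mul_conj, Complex.mul_conj, Complex.mul_conj, Complex.mul_conj] at hcplx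
      have hreal : Complex.normSq (a x) - Complex.normSq (b x) =
          Complex.normSq (a (x+1)) - Complex.normSq (b (x+1)) := by exact_mod_cast hcplx
      rw [hreal, hprev]
  intro x hx0 hxL
  rw [Complex.sq_norm, Complex.sq_norm]
  exact key (L - x).toNat x hx0 (by omega)
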